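/- Let G be a finite group with proper subgroups A and B, and let G act by right multiplication on the set Ω_B of right cosets of B. Set β = B ∈ Ω_B and Γ = β^A. Then G = ABA if and only if Γ has restricted movement, i.e. Γ^g ∩ Γ ≠ ∅ for every g ∈ G. -/

import Mathlib

open scoped Pointwise

/-- Restricted movement criterion: `G = ABA` iff the `A`-orbit `Γ` of the
trivial coset `β = B` in `Ω_B = G ⧸ B` has restricted movement, i.e.
`gΓ ∩ Γ ≠ ∅` for every `g ∈ G`. -/
theorem triple_factorisation_iff_restricted_movement
    (G : Type*) [Group G] [Fintype G] (A B : Subgroup G)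
    (hA : A ≠ ⊤) (hB : B ≠ ⊤) :
    (A : Set G) * (B : Set G) * (A : Set G) = Set.univ ↔
      ∀ g : G,
        (g • MulAction.orbit A ((1 : G) : G ⧸ B) ∩
          MulAction.orbit A ((1 : G) : G ⧸ B)).Nonempty := by
  have horb : ∀ x : G ⧸ B, x ∈ MulAction.orbit A ((1 : G) : G ⧸ B) ↔
      ∃ a ∈ A, ((a : G) : G ⧸ B) = x := by
    intro x
    constructor
    · rintro ⟨⟨a, ha⟩, rfl⟩
      exact ⟨a, ha, by change _ = ((a : G) • ((1 : G) : G ⧸ B)); rw [MulAction.Quotient.smul_mk, smul_eq_mul, mul_one]⟩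
    · rintro ⟨a, ha, rfl⟩
      exact ⟨⟨a, ha⟩, by change ((a : G) • ((1 : G) : G ⧸ B)) = _; rw [MulAction.Quotient.smul_mk, smul_eq_mul, mul_one]⟩
  constructor
  · intro h g
    have hg : g ∈ (A : Set G) * (B : Set G) * (A : Set G) := by
      rw [h]; trivial
    obtain ⟨ab, ⟨a₁, ha₁, b, hb, rfl⟩, a₂, ha₂, rfl⟩ := hg
    refine ⟨((a₁ : G) : G ⧸ B), ⟨((a₂⁻¹ : G) : G ⧸ B), (horb _).2 ⟨a₂⁻¹, inv_mem ha₂, rfl⟩, ?_⟩,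
      (horb _).2 ⟨a₁, ha₁, rfl⟩⟩
    show ((a₁ * b * a₂ * a₂⁻¹ : G) : G ⧸ B) = ((a₁ : G) : G ⧸ B)
    apply (QuotientGroup.eq).2
    simpa [mul_assoc] using hb
  · intro h
    ext g
    simp only [Set.mem_univ, iff_true]
    obtain ⟨x, hx1, hx2⟩ := h g
    obtain ⟨y, hy, rfl⟩ := hx1
    obtain ⟨a, ha, rfl⟩ := (horb _).1 hy
    obtain ⟨a', ha', heq⟩ := (horb _).1 hx2
    have heq2 : ((a' : G) : G ⧸ B) = ((g * a : G) : G ⧸ B) := heq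
    have hmem := (QuotientGroup.eq).1 heq2
    refine ⟨a' * ((a')⁻¹ * (g * a)), ⟨a', ha', (a')⁻¹ * (g * a), ?_, rfl⟩, a⁻¹, inv_mem ha,
      by group⟩
    simpa using hmem
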